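/- Let λ > 0 and define N_λ(x) = (x_1^2+...+x_n^2)^{1/2} · (1 + λ (x_1^2+...+x_{n-1}^2 − 2 x_n^2)/(x_1^2+...+x_n^2))^2 for x ≠ 0 in R^n, N_λ(0) = 0. Then N_λ is a norm on R^n if and only if λ ≤ 1/11. -/

import Mathlib

open Finset

noncomputable def Fl (lam u v : ℝ) : ℝ :=
  ((1+lam)*u^2 + (1-2*lam)*v^2)^2 * (u^2+v^2) ^ (-(3:ℝ)/2)

-- homogeneity
lemma Fl_hom (lam c u v : ℝ) : Fl lam (c*u) (c*v) = |c| * Fl lam u v := by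
  rcases eq_or_ne c 0 with rfl | hc
  · simp [Fl]
  rcases eq_or_ne (u^2+v^2) 0 with h | h
  · have hu : u = 0 := by nlinarith [sq_nonneg u, sq_nonneg v]
    have hv : v = 0 := by nlinarith [sq_nonneg u, sq_nonneg v]
    simp [Fl, hu, hv]
  · have hc2 : (0:ℝ) < c^2 := by positivity
    have hP : (0:ℝ) < u^2+v^2 := lt_of_le_of_ne (by positivity) (Ne.symm h)
    unfold Fl
    have e1 : (c*u)^2+(c*v)^2 = c^2*(u^2+v^2) := by ring
    rw [e1, Real.mul_rpow (le_of_lt hc2) (le_of_lt hP)]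
    have e2 : (c^2:ℝ) ^ (-(3:ℝ)/2) = |c| ^ (-(3:ℝ)) := by
      rw [← sq_abs, ← Real.rpow_natCast |c| 2, ← Real.rpow_mul (abs_nonneg c)]
      norm_num
    have hac : (0:ℝ) < |c| := abs_pos.mpr hc
    have e3 : ((1+lam)*(c*u)^2 + (1-2*lam)*(c*v)^2)^2
        = |c|^(4:ℕ) * ((1+lam)*u^2 + (1-2*lam)*v^2)^2 := by
      rw [show |c|^(4:ℕ) = (|c|^2)^2 by ring, sq_abs c]; ring
    rw [e2, e3]
    have e4 : |c|^(4:ℕ) * |c| ^ (-(3:ℝ)) = |c| := by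
      rw [← Real.rpow_natCast |c| 4, ← Real.rpow_add hac]
      norm_num
    calc |c|^(4:ℕ) * ((1+lam)*u^2 + (1-2*lam)*v^2)^2 * (|c| ^ (-(3:ℝ)) * (u^2+v^2) ^ (-(3:ℝ)/2))
        = (|c|^(4:ℕ) * |c| ^ (-(3:ℝ))) * (((1+lam)*u^2 + (1-2*lam)*v^2)^2 * (u^2+v^2) ^ (-(3:ℝ)/2)) := by ring
      _ = _ := by rw [e4]

lemma Fl_even_u (lam u v : ℝ) : Fl lam (-u) v = Fl lam u v := by simp [Fl]
lemma Fl_even_v (lam u v : ℝ) : Fl lam u (-v) = Fl lam u v := by simp [Fl]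

section LineConvex
variable (lam z1 z2 w1 w2 : ℝ)

/-- line convexity of Fl along a line avoiding the origin -/
lemma Fl_line_convex (h0 : 0 < lam) (h1 : lam ≤ 1/11)
    (hP : ∀ t : ℝ, (z1+t*w1)^2 + (z2+t*w2)^2 ≠ 0) :
    ConvexOn ℝ Set.univ (fun t => Fl lam (z1+t*w1) (z2+t*w2)) := by
  set a : ℝ → ℝ := fun t => z1+t*w1 with ha
  set b : ℝ → ℝ := fun t => z2+t*w2 with hb
  set P : ℝ → ℝ := fun t => (a t)^2 + (b t)^2 with hPdef
  set G : ℝ → ℝ := fun t => (1+lam)*(a t)^2 + (1-2*lam)*(b t)^2 with hGdef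
  set P' : ℝ → ℝ := fun t => 2*(a t*w1 + b t*w2) with hP'
  set G' : ℝ → ℝ := fun t => 2*((1+lam)*(a t)*w1 + (1-2*lam)*(b t)*w2) with hG'
  have hPpos : ∀ t, 0 < P t := by
    intro t
    exact lt_of_le_of_ne (by positivity) (Ne.symm (hP t))
  have hat : ∀ t, HasDerivAt a w1 t := by
    intro t
    have : HasDerivAt (fun t : ℝ => z1 + t*w1) (0 + 1*w1) t :=
      (hasDerivAt_const t z1).add ((hasDerivAt_id t).mul_const w1)
    exact this.congr_deriv (by ring)
  have hbt : ∀ t, HasDerivAt b w2 t := by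
    intro t
    have : HasDerivAt (fun t : ℝ => z2 + t*w2) (0 + 1*w2) t :=
      (hasDerivAt_const t z2).add ((hasDerivAt_id t).mul_const w2)
    exact this.congr_deriv (by ring)
  set G'' : ℝ := 2*((1+lam)*w1^2 + (1-2*lam)*w2^2) with hG''
  set P'' : ℝ := 2*(w1^2+w2^2) with hP''
  have hPt : ∀ t, HasDerivAt P (P' t) t := by
    intro t
    have := ((hat t).pow 2).add ((hbt t).pow 2)
    refine this.congr_deriv ?_
    push_cast
    ring
  have hGt : ∀ t, HasDerivAt G (G' t) t := by
    intro t
    have := (((hat t).pow 2).const_mul (1+lam)).add (((hbt t).pow 2).const_mul (1-2*lam))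
    refine this.congr_deriv ?_
    push_cast
    ring
  have hG't : ∀ t, HasDerivAt G' G'' t := by
    intro t
    have := ((((hat t).const_mul (1+lam)).mul_const w1).add
      (((hbt t).const_mul (1-2*lam)).mul_const w2)).const_mul 2
    refine this.congr_deriv ?_
    ring
  have hP't : ∀ t, HasDerivAt P' P'' t := by
    intro t
    have := (((hat t).mul_const w1).add ((hbt t).mul_const w2)).const_mul 2
    refine this.congr_deriv ?_
    ring
  set q1 : ℝ → ℝ := fun t => 2*G t*G' t * P t^(-(3:ℝ)/2)
      + G t^2 * ((-(3:ℝ)/2) * P t^(-(5:ℝ)/2) * P' t) with hq1def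
  set q2 : ℝ → ℝ := fun t =>
      (8*(G' t^2 + G t*G'') * (P t)^2 - 24*G t*G' t*P' t*P t
        - 6*(G t)^2*P''*P t + 15*(G t)^2*(P' t)^2) / 4 * P t ^ (-(7:ℝ)/2) with hq2def
  have e32 : ∀ t, P t ^ (-(3:ℝ)/2) = (P t)^2 * P t ^ (-(7:ℝ)/2) := by
    intro t
    rw [← Real.rpow_natCast (P t) 2, ← Real.rpow_add (hPpos t)]
    norm_num
  have e52 : ∀ t, P t ^ (-(5:ℝ)/2) = P t * P t ^ (-(7:ℝ)/2) := by
    intro t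
    nth_rewrite 2 [← Real.rpow_one (P t)]
    rw [← Real.rpow_add (hPpos t)]
    norm_num
  have hrpow32 : ∀ t, HasDerivAt (fun s => P s ^ (-(3:ℝ)/2))
      ((-(3:ℝ)/2) * P t ^ (-(5:ℝ)/2) * P' t) t := by
    intro t
    have := (hPt t).rpow_const (p := -(3:ℝ)/2) (Or.inl (hP t))
    have e : P t ^ (-(3:ℝ)/2 - 1) = P t ^ (-(5:ℝ)/2) := by norm_num
    convert this using 1
    rw [e]
    ring
  have hrpow52 : ∀ t, HasDerivAt (fun s => P s ^ (-(5:ℝ)/2))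
      ((-(5:ℝ)/2) * P t ^ (-(7:ℝ)/2) * P' t) t := by
    intro t
    have := (hPt t).rpow_const (p := -(5:ℝ)/2) (Or.inl (hP t))
    have e : P t ^ (-(5:ℝ)/2 - 1) = P t ^ (-(7:ℝ)/2) := by norm_num
    convert this using 1
    rw [e]
    ring
  have hqt : ∀ t, HasDerivAt (fun s => G s^2 * P s ^ (-(3:ℝ)/2)) (q1 t) t := by
    intro t
    have hsq : HasDerivAt (fun s => G s^2) (2*G t*G' t) t := by
      have := (hGt t).pow 2
      refine this.congr_deriv ?_
      push_cast
      ring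
    exact (hsq.mul (hrpow32 t)).congr_deriv (by simp only [hq1def])
  have hq1t : ∀ t, HasDerivAt q1 (q2 t) t := by
    intro t
    have hsq : HasDerivAt (fun s => G s^2) (2*G t*G' t) t := by
      have := (hGt t).pow 2
      refine this.congr_deriv ?_
      push_cast
      ring
    have hterm1 : HasDerivAt (fun s => 2*G s*G' s * P s^(-(3:ℝ)/2))
        ((2*(G' t*G' t) + 2*(G t*G'')) * P t^(-(3:ℝ)/2)
          + 2*G t*G' t * ((-(3:ℝ)/2) * P t ^ (-(5:ℝ)/2) * P' t)) t := by
      have hGG' : HasDerivAt (fun s => 2*G s*G' s) (2*(G' t*G' t) + 2*(G t*G'')) t := by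
        have := ((hGt t).mul (hG't t)).const_mul 2
        rw [show (fun s => 2*G s*G' s) = (fun y => 2 * (G*G') y) by funext s; simp only [Pi.mul_apply]; ring]
        exact this.congr_deriv (by ring)
      exact hGG'.mul (hrpow32 t)
    have hterm2 : HasDerivAt (fun s => G s^2 * ((-(3:ℝ)/2) * P s^(-(5:ℝ)/2) * P' s))
        (2*G t*G' t * ((-(3:ℝ)/2) * P t^(-(5:ℝ)/2) * P' t)
          + G t^2 * (((-(3:ℝ)/2) * ((-(5:ℝ)/2) * P t ^ (-(7:ℝ)/2) * P' t)) * P' t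
            + ((-(3:ℝ)/2) * P t^(-(5:ℝ)/2)) * P'')) t := by
      have hinner : HasDerivAt (fun s => (-(3:ℝ)/2) * P s^(-(5:ℝ)/2) * P' s)
          (((-(3:ℝ)/2) * ((-(5:ℝ)/2) * P t ^ (-(7:ℝ)/2) * P' t)) * P' t
            + ((-(3:ℝ)/2) * P t^(-(5:ℝ)/2)) * P'') t := by
        exact ((hrpow52 t).const_mul (-(3:ℝ)/2)).mul (hP't t)
      exact hsq.mul hinner
    have := hterm1.add hterm2
    refine this.congr_deriv ?_
    simp only [hq2def]
    rw [e32 t, e52 t]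
    ring
  -- nonnegativity of q2
  have hq2nonneg : ∀ t, 0 ≤ q2 t := by
    intro t
    have h1 : (0:ℝ) ≤ 1+8*lam-20*lam^2 := by nlinarith
    have h2 : (0:ℝ) ≤ 1-lam+52*lam^2 := by nlinarith
    have h3 : (0:ℝ) ≤ 1-10*lam-11*lam^2 := by nlinarith
    have hM : (0:ℝ) ≤ 4*(b t)^4*(1+8*lam-20*lam^2) + 8*(a t)^2*(b t)^2*(1-lam+52*lam^2)
        + 4*(a t)^4*(1-10*lam-11*lam^2) := by
      have m1 := mul_nonneg h1 (sq_nonneg ((b t)^2))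
      have m2 := mul_nonneg h2 (sq_nonneg ((a t)*(b t)))
      have m3 := mul_nonneg h3 (sq_nonneg ((a t)^2))
      nlinarith [m1, m2, m3]
    have key : 8*(G' t^2 + G t*G'') * (P t)^2 - 24*G t*G' t*P' t*P t
        - 6*(G t)^2*P''*P t + 15*(G t)^2*(P' t)^2
        = (4*(b t)^4*(1+8*lam-20*lam^2) + 8*(a t)^2*(b t)^2*(1-lam+52*lam^2)
          + 4*(a t)^4*(1-10*lam-11*lam^2)) * (b t*w1 - a t*w2)^2 := by
      simp only [hGdef, hPdef, hG', hP', hG'', hP'']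
      ring
    have hX : 0 ≤ 8*(G' t^2 + G t*G'') * (P t)^2 - 24*G t*G' t*P' t*P t
        - 6*(G t)^2*P''*P t + 15*(G t)^2*(P' t)^2 := by
      rw [key]
      exact mul_nonneg hM (sq_nonneg _)
    exact mul_nonneg (div_nonneg hX (by norm_num)) (Real.rpow_nonneg (hPpos t).le _)
  have : ConvexOn ℝ Set.univ (fun t => G t^2 * P t ^ (-(3:ℝ)/2)) := by
    apply convexOn_of_hasDerivWithinAt2_nonneg (f' := q1) (f'' := q2) convex_univ
    · exact fun t _ => (hqt t).continuousAt.continuousWithinAt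
    · intro t _
      exact (hqt t).hasDerivWithinAt
    · intro t _
      exact (hq1t t).hasDerivWithinAt
    · intro t _
      exact hq2nonneg t
  convert this using 2 with t
  try simp only [Fl, hGdef, hPdef]
  rfl

end LineConvex

lemma Fl_nonneg (lam u v : ℝ) : 0 ≤ Fl lam u v := by
  unfold Fl
  positivity

lemma Fl_one_zero (lam : ℝ) : Fl lam 1 0 = (1+lam)^2 := by
  simp [Fl]

lemma Fl_pos (lam u v : ℝ) (h0 : 0 < lam) (h1 : lam ≤ 1/11) (h : u^2 + v^2 ≠ 0) :
    0 < Fl lam u v := by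
  have hP : 0 < u^2+v^2 := lt_of_le_of_ne (by positivity) (Ne.symm h)
  have hG : 0 < (1+lam)*u^2 + (1-2*lam)*v^2 := by nlinarith [sq_nonneg u, sq_nonneg v]
  unfold Fl
  exact mul_pos (by positivity) (Real.rpow_pos_of_pos hP _)

lemma Fl_subadd (lam u1 v1 u2 v2 : ℝ) (h0 : 0 < lam) (h1 : lam ≤ 1/11) :
    Fl lam (u1+u2) (v1+v2) ≤ Fl lam u1 v1 + Fl lam u2 v2 := by
  by_cases hline : ∀ t : ℝ, (u1 + t*(u2-u1))^2 + (v1 + t*(v2-v1))^2 ≠ 0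
  · have conv := Fl_line_convex lam u1 v1 (u2-u1) (v2-v1) h0 h1 hline
    have key := conv.2 (Set.mem_univ (0:ℝ)) (Set.mem_univ (1:ℝ))
      (by norm_num : (0:ℝ) ≤ 1/2) (by norm_num : (0:ℝ) ≤ 1/2) (by norm_num)
    simp only [smul_eq_mul, mul_zero, mul_one, zero_add] at key
    have e0 : u1 + (0:ℝ)*(u2-u1) = u1 := by ring
    have e0' : v1 + (0:ℝ)*(v2-v1) = v1 := by ring
    have e1 : u1 + (1:ℝ)*(u2-u1) = u2 := by ring
    have e1' : v1 + (1:ℝ)*(v2-v1) = v2 := by ring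
    have eh : u1 + (1/2:ℝ)*(u2-u1) = (1/2)*(u1+u2) := by ring
    have eh' : v1 + (1/2:ℝ)*(v2-v1) = (1/2)*(v1+v2) := by ring
    rw [e0, e0', e1, e1', eh, eh', Fl_hom] at key
    rw [show |(1/2 : ℝ)| = 1/2 by norm_num] at key
    linarith
  · push_neg at hline
    obtain ⟨t0, ht0⟩ := hline
    have h1z : u1 + t0*(u2-u1) = 0 := by nlinarith [sq_nonneg (u1+t0*(u2-u1)), sq_nonneg (v1+t0*(v2-v1))]
    have h2z : v1 + t0*(v2-v1) = 0 := by nlinarith [sq_nonneg (u1+t0*(u2-u1)), sq_nonneg (v1+t0*(v2-v1))]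
    set d1 := u2 - u1 with hd1
    set d2 := v2 - v1 with hd2
    have hu1 : u1 = (-t0)*d1 := by linarith
    have hv1 : v1 = (-t0)*d2 := by linarith
    have hu2 : u2 = (1-t0)*d1 := by rw [hd1] at *; linarith
    have hv2 : v2 = (1-t0)*d2 := by rw [hd2] at *; linarith
    have hs : u1 + u2 = (1-2*t0)*d1 := by rw [hu1, hu2]; ring
    have hs' : v1 + v2 = (1-2*t0)*d2 := by rw [hv1, hv2]; ring
    rw [hs, hs', Fl_hom, hu1, hv1, Fl_hom, hu2, hv2, Fl_hom]
    have habs : |1-2*t0| ≤ |(-t0)| + |1-t0| := by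
      have := abs_add_le (-t0) (1-t0)
      have e : -t0 + (1-t0) = 1-2*t0 := by ring
      rw [e] at this
      linarith
    have hF := Fl_nonneg lam d1 d2
    nlinarith [hF, habs]

lemma Fl_mono (lam u u' v : ℝ) (h0 : 0 < lam) (h1 : lam ≤ 1/11)
    (hu' : 0 ≤ u') (huu : u' ≤ u) : Fl lam u' v ≤ Fl lam u v := by
  rcases eq_or_lt_of_le (hu'.trans huu) with hu | hu
  · have : u' = 0 := le_antisymm (huu.trans_eq hu.symm) hu'
    rw [this, ← hu]
  · by_cases hv : v = 0
    · subst hv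
      have c1 : Fl lam u' 0 = u' * (1+lam)^2 := by
        have := Fl_hom lam u' 1 0
        rw [mul_one, mul_zero] at this
        rw [this, Fl_one_zero, abs_of_nonneg hu']
      have c2 : Fl lam u 0 = u * (1+lam)^2 := by
        have := Fl_hom lam u 1 0
        rw [mul_one, mul_zero] at this
        rw [this, Fl_one_zero, abs_of_nonneg hu.le]
      rw [c1, c2]
      nlinarith
    · have hline : ∀ t : ℝ, (-u + t*(2*u))^2 + (v + t*0)^2 ≠ 0 := by
        intro t hc
        have : v^2 > 0 := by positivity
        nlinarith [sq_nonneg (-u + t*(2*u))]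
      have conv := Fl_line_convex lam (-u) v (2*u) 0 h0 h1 hline
      set θ : ℝ := (u+u')/(2*u) with hθ
      have hθ0 : 0 ≤ θ := by
        apply div_nonneg <;> linarith
      have hθ1 : 1-θ ≥ 0 := by
        rw [hθ]
        rw [ge_iff_le, sub_nonneg, div_le_one (by linarith)]
        linarith
      have key := conv.2 (Set.mem_univ (0:ℝ)) (Set.mem_univ (1:ℝ)) hθ1 hθ0 (by ring)
      norm_num at key
      have eθ : -u + θ*(2*u) = u' := by
        rw [hθ]
        field_simp
        try ring
      have e1 : -u + 2*u = u := by ring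
      rw [eθ, e1, Fl_even_u] at key
      calc Fl lam u' v ≤ (1-θ)*Fl lam u v + θ*Fl lam u v := key
        _ = Fl lam u v := by ring

lemma quartic_key (lam s : ℝ) (h : 1/11 < lam) (hs0 : 0 < s) (hs1 : s ≤ 1)
    (h152 : 152*(1+lam)*s = 11*lam-1) :
    ((1+lam) + (1-2*lam)*s)^4 < (1+lam)^4 * (1+s)^3 := by
  set A := 1+lam with hA'
  set B := 1-2*lam with hB'
  have hA : (0:ℝ) < A := by rw [hA']; linarith
  have hA4 : (0:ℝ) < A^4 := by positivity
  have hB1 : B ≤ 2*A := by rw [hA', hB']; linarith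
  have hB2 : -(2*A) ≤ B := by rw [hA', hB']; linarith
  have hBsq : B^2 ≤ 4*A^2 := by nlinarith
  have hB3u : B^3 ≤ 8*A^3 := by nlinarith
  have hB3l : -(8*A^3) ≤ B^3 := by nlinarith
  have hc2 : 3*A^4 - 6*A^2*B^2 ≥ -21*A^4 := by nlinarith [sq_nonneg A, mul_le_mul_of_nonneg_left hBsq (by positivity : (0:ℝ) ≤ 6*A^2)]
  have hc3l : (A*(A^3 - 4*B^3)) ≥ -31*A^4 := by nlinarith
  have hc3s : (A*(A^3 - 4*B^3))*s ≥ -31*A^4 := by nlinarith [mul_le_mul_of_nonneg_right hc3l hs0.le]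
  have hB4 : B^4 ≤ 16*A^4 := by nlinarith [mul_le_mul hBsq hBsq (sq_nonneg B) (by positivity : (0:ℝ) ≤ 4*A^2)]
  have hss : s^2 ≤ 1 := by nlinarith
  have hc4 : -(B^4)*s^2 ≥ -16*A^4 := by nlinarith [hB4, hss, sq_nonneg s, sq_nonneg B, mul_le_mul_of_nonneg_left hss (le_trans (by positivity) hB4 : (0:ℝ) ≤ 16*A^4)]
  have hinner : 152*A^4 + (3*A^4 - 6*A^2*B^2) + (A*(A^3 - 4*B^3))*s + (-(B^4))*s^2 ≥ 84*A^4 := by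
    nlinarith [hc2, hc3s, hc4]
  have hDiff : A^4*(1+s)^3 - (A + B*s)^4
      = s * (s*(152*A^4 + (3*A^4 - 6*A^2*B^2)) + s*((A*(A^3 - 4*B^3))*s + (-(B^4))*s^2)) := by
    rw [hA', hB']
    linear_combination (-(s*(1+lam)^3))*h152
  nlinarith [hDiff, mul_le_mul_of_nonneg_left hinner (sq_nonneg s), mul_pos (mul_pos hs0 hs0) hA4]

lemma Fl_counter (lam : ℝ) (h : 1/11 < lam) : ∃ t : ℝ, Fl lam 1 t < (1+lam)^2 := by
  have hlam : 0 < lam := lt_trans (by norm_num) h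
  have hA0 : (0:ℝ) < 1+lam := by linarith
  set s : ℝ := (11*lam-1)/(152*(1+lam)) with hs'
  have hs0 : 0 < s := div_pos (by linarith) (by linarith)
  have hs1 : s ≤ 1 := by
    rw [hs', div_le_one (by linarith)]
    linarith
  have h152 : 152*(1+lam)*s = 11*lam-1 := by
    rw [hs']
    field_simp
  have hquartic := quartic_key lam s h hs0 hs1 h152
  refine ⟨Real.sqrt s, ?_⟩
  have ht2 : (Real.sqrt s)^2 = s := Real.sq_sqrt hs0.le
  have h1s : (0:ℝ) < 1 + s := by linarith
  set T : ℝ := (1+s) ^ ((3:ℝ)/2) with hT'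
  have hT : 0 < T := Real.rpow_pos_of_pos h1s _
  have hTT : T^2 = (1+s)^3 := by
    rw [hT', ← Real.rpow_natCast ((1+s) ^ ((3:ℝ)/2)) 2, ← Real.rpow_mul h1s.le]
    norm_num
  have hFl : Fl lam 1 (Real.sqrt s) = ((1+lam) + (1-2*lam)*s)^2 / T := by
    unfold Fl
    rw [ht2, one_pow]
    rw [show (1:ℝ) + s = 1 + s by ring]
    rw [show (-(3:ℝ)/2) = -((3:ℝ)/2) by norm_num, Real.rpow_neg h1s.le, ← hT']
    rw [div_eq_mul_inv]
    ring_nf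
  rw [hFl, div_lt_iff₀ hT]
  have hL : 0 ≤ ((1+lam) + (1-2*lam)*s)^2 := sq_nonneg _
  have hR : 0 < (1+lam)^2 * T := by positivity
  have hsq : (((1+lam) + (1-2*lam)*s)^2)^2 < ((1+lam)^2 * T)^2 := by
    calc (((1+lam) + (1-2*lam)*s)^2)^2 = ((1+lam) + (1-2*lam)*s)^4 := by ring
    _ < (1+lam)^4 * (1+s)^3 := hquartic
    _ = ((1+lam)^2 * T)^2 := by rw [mul_pow, hTT]; ring
  exact lt_of_pow_lt_pow_left₀ 2 hR.le hsq

lemma Fl_hom_abs (lam c u v : ℝ) : Fl lam (|c| * u) (c*v) = |c| * Fl lam u v := by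
  rcases le_or_gt 0 c with hc | hc
  · rw [abs_of_nonneg hc, Fl_hom, abs_of_nonneg hc]
  · rw [abs_of_neg hc]
    have e : c*v = -((-c)*v) := by ring
    rw [e, Fl_even_v, Fl_hom, abs_of_pos (by linarith : 0 < -c)]

lemma sqrt_minkowski {ι : Type*} (s : Finset ι) (x y : ι → ℝ) :
    Real.sqrt (∑ i ∈ s, (x i + y i)^2) ≤
      Real.sqrt (∑ i ∈ s, x i ^2) + Real.sqrt (∑ i ∈ s, y i ^2) := by
  set A := ∑ i ∈ s, x i ^2 with hA'
  set B := ∑ i ∈ s, y i ^2 with hB'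
  have hA : 0 ≤ A := Finset.sum_nonneg fun i _ => sq_nonneg _
  have hB : 0 ≤ B := Finset.sum_nonneg fun i _ => sq_nonneg _
  have hCS : (∑ i ∈ s, x i * y i)^2 ≤ A*B := Finset.sum_mul_sq_le_sq_mul_sq s x y
  have hxy : ∑ i ∈ s, x i * y i ≤ Real.sqrt A * Real.sqrt B := by
    calc ∑ i ∈ s, x i * y i ≤ |∑ i ∈ s, x i * y i| := le_abs_self _
      _ = Real.sqrt ((∑ i ∈ s, x i * y i)^2) := (Real.sqrt_sq_eq_abs _).symm
      _ ≤ Real.sqrt (A*B) := Real.sqrt_le_sqrt hCS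
      _ = Real.sqrt A * Real.sqrt B := Real.sqrt_mul hA B
  have hexp : ∑ i ∈ s, (x i + y i)^2 = A + 2*(∑ i ∈ s, x i * y i) + B := by
    rw [hA', hB', Finset.mul_sum, ← Finset.sum_add_distrib, ← Finset.sum_add_distrib]
    exact Finset.sum_congr rfl fun i _ => by ring
  have hle : ∑ i ∈ s, (x i + y i)^2 ≤ (Real.sqrt A + Real.sqrt B)^2 := by
    rw [hexp]
    have e : (Real.sqrt A + Real.sqrt B)^2 = A + 2*(Real.sqrt A * Real.sqrt B) + B := by
      rw [add_sq, Real.sq_sqrt hA, Real.sq_sqrt hB]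
      ring
    rw [e]
    linarith
  calc Real.sqrt (∑ i ∈ s, (x i + y i)^2) ≤ Real.sqrt ((Real.sqrt A + Real.sqrt B)^2) :=
        Real.sqrt_le_sqrt hle
    _ = Real.sqrt A + Real.sqrt B := Real.sqrt_sq (by positivity)


theorem stmt6 (n : ℕ) (hn : 2 ≤ n) (lam : ℝ) (hlam : 0 < lam)
    (N : (Fin n → ℝ) → ℝ)
    (hN : ∀ x : Fin n → ℝ, x ≠ 0 →
      N x = (∑ i, x i ^ 2) ^ ((1 : ℝ) / 2) *
        (1 + lam * ((∑ i ∈ Finset.univ.erase ⟨n - 1, by omega⟩, x i ^ 2)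
            - 2 * x ⟨n - 1, by omega⟩ ^ 2) / (∑ i, x i ^ 2)) ^ 2)
    (hN0 : N 0 = 0) :
    ((∀ x, N x = 0 ↔ x = 0) ∧ (∀ (c : ℝ) (x), N (c • x) = |c| * N x) ∧
      (∀ x y, N (x + y) ≤ N x + N y)) ↔ lam ≤ 1 / 11 := by
  have hn1 : n - 1 < n := by omega
  set last : Fin n := ⟨n-1, hn1⟩ with hlast
  set u : (Fin n → ℝ) → ℝ := fun x => Real.sqrt (∑ i ∈ Finset.univ.erase last, x i ^ 2) with hu
  have hUnonneg : ∀ x : Fin n → ℝ, (0:ℝ) ≤ ∑ i ∈ Finset.univ.erase last, x i ^ 2 :=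
    fun x => Finset.sum_nonneg fun i _ => sq_nonneg _
  have husq : ∀ x : Fin n → ℝ, (u x)^2 = ∑ i ∈ Finset.univ.erase last, x i ^ 2 :=
    fun x => Real.sq_sqrt (hUnonneg x)
  have hsum : ∀ x : Fin n → ℝ, (∑ i ∈ Finset.univ.erase last, x i ^ 2) + x last ^2 = ∑ i, x i ^2 :=
    fun x => Finset.sum_erase_add _ _ (Finset.mem_univ last)
  have hNF : ∀ x : Fin n → ℝ, N x = Fl lam (u x) (x last) := by
    intro x
    rcases eq_or_ne x 0 with rfl | hx
    · rw [hN0]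
      have : u 0 = 0 := by simp [hu]
      rw [this]
      simp [Fl]
    · rw [hN x hx]
      set R := ∑ i, x i ^2 with hR'
      set U := ∑ i ∈ Finset.univ.erase last, x i ^ 2 with hU'
      obtain ⟨i, hi⟩ := Function.ne_iff.mp hx
      have hR : 0 < R := by
        have h1 : x i ^2 ≤ R := Finset.single_le_sum (fun j _ => sq_nonneg (x j)) (Finset.mem_univ i)
        have h2 : 0 < x i ^2 := lt_of_le_of_ne (sq_nonneg _) (Ne.symm (pow_ne_zero 2 hi))
        linarith
      have hRne : R ≠ 0 := ne_of_gt hR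
      have hux : (u x)^2 = U := husq x
      have hUR : U + x last^2 = R := hsum x
      unfold Fl
      rw [hux, hUR]
      have erpow : R ^ (-(3:ℝ)/2) = R ^ ((1:ℝ)/2) * (R^2)⁻¹ := by
        rw [show (-(3:ℝ)/2) = (1:ℝ)/2 + (-2:ℝ) by norm_num, Real.rpow_add hR,
          show ((-2:ℝ)) = ((-2:ℤ):ℝ) by norm_num, Real.rpow_intCast]
        norm_num
      have hRne' : (U + x last^2) ≠ 0 := by rw [hUR]; exact hRne
      rw [erpow, ← hUR]
      field_simp
      ring
  constructor
  · -- norm → lam ≤ 1/11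
    rintro ⟨hdef, hhom, htri⟩
    by_contra hcon
    push_neg at hcon
    obtain ⟨t, hct⟩ := Fl_counter lam hcon
    have hi0lt : 0 < n := by omega
    set i0 : Fin n := ⟨0, hi0lt⟩ with hi0
    have hne : i0 ≠ last := by
      simp only [hi0, hlast, Ne, Fin.mk.injEq]
      omega
    set x : Fin n → ℝ := fun i => (if i = i0 then (1:ℝ) else 0) + (if i = last then -t else 0) with hx
    set y : Fin n → ℝ := fun i => (if i = i0 then (1:ℝ) else 0) + (if i = last then t else 0) with hy
    have hmem : i0 ∈ Finset.univ.erase last := Finset.mem_erase.mpr ⟨hne, Finset.mem_univ i0⟩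
    have hsx : ∀ (c : ℝ), (∑ i ∈ Finset.univ.erase last,
        ((if i = i0 then (1:ℝ) else 0) + (if i = last then c else 0))^2) = 1 := by
      intro c
      have hcong : ∀ i ∈ Finset.univ.erase last,
          ((if i = i0 then (1:ℝ) else 0) + (if i = last then c else 0))^2
            = if i = i0 then (1:ℝ) else 0 := by
        intro i hi
        have hil : i ≠ last := (Finset.mem_erase.mp hi).1
        by_cases h : i = i0 <;> simp [h, hil, hne]
      rw [Finset.sum_congr rfl hcong, Finset.sum_ite_eq' (Finset.univ.erase last) i0 (fun _ => (1:ℝ))]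
      simp [hmem]
    have hux : u x = 1 := by
      rw [hu]
      simp only [hx]
      rw [hsx (-t), Real.sqrt_one]
    have huy : u y = 1 := by
      rw [hu]
      simp only [hy]
      rw [hsx t, Real.sqrt_one]
    have hxlast : x last = -t := by
      simp [hx, Ne.symm hne]
    have hylast : y last = t := by
      simp [hy, Ne.symm hne]
    have hxy : x + y = fun i => (if i = i0 then (2:ℝ) else 0) := by
      funext i
      simp only [Pi.add_apply, hx, hy]
      by_cases h : i = i0
      · have hil : i ≠ last := by rw [h]; exact hne
        simp [h, hil, hne]
        norm_num
      · by_cases h2 : i = last <;> simp [h, h2, Ne.symm hne]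
    have huxy : u (x+y) = 2 := by
      rw [hu]
      simp only [hxy]
      have hcong : ∀ i ∈ Finset.univ.erase last,
          ((if i = i0 then (2:ℝ) else 0))^2 = if i = i0 then (4:ℝ) else 0 := by
        intro i hi
        by_cases h : i = i0 <;> simp [h] <;> norm_num
      rw [Finset.sum_congr rfl hcong, Finset.sum_ite_eq' (Finset.univ.erase last) i0 (fun _ => (4:ℝ))]
      simp only [hmem, if_true]
      rw [show (4:ℝ) = 2^2 by norm_num, Real.sqrt_sq (by norm_num : (0:ℝ) ≤ 2)]
    have hxylast : (x+y) last = 0 := by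
      rw [hxy]
      simp [Ne.symm hne]
    have hNx : N x = Fl lam 1 t := by
      rw [hNF x, hux, hxlast]
      exact Fl_even_v lam 1 t
    have hNy : N y = Fl lam 1 t := by
      rw [hNF y, huy, hylast]
    have hNxy : N (x+y) = 2*(1+lam)^2 := by
      rw [hNF (x+y), huxy, hxylast]
      have h2 : Fl lam 2 0 = |(2:ℝ)| * Fl lam 1 0 := by
        have := Fl_hom lam 2 1 0
        rw [mul_one, mul_zero] at this
        exact this
      rw [h2, Fl_one_zero]
      norm_num
    have := htri x y
    rw [hNx, hNy, hNxy] at this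
    linarith
  · -- lam ≤ 1/11 → norm
    intro hle
    refine ⟨?_, ?_, ?_⟩
    · intro x
      constructor
      · intro hx0
        by_contra hx
        obtain ⟨i, hi⟩ := Function.ne_iff.mp hx
        have hR : 0 < ∑ i, x i ^2 := by
          have h1 : x i ^2 ≤ ∑ i, x i ^2 := Finset.single_le_sum (fun j _ => sq_nonneg (x j)) (Finset.mem_univ i)
          have h2 : 0 < x i ^2 := lt_of_le_of_ne (sq_nonneg _) (Ne.symm (pow_ne_zero 2 hi))
          linarith
        have hPne : (u x)^2 + (x last)^2 ≠ 0 := by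
          rw [husq x, hsum x]
          exact ne_of_gt hR
        have := Fl_pos lam (u x) (x last) hlam hle hPne
        rw [hNF x] at hx0
        linarith
      · rintro rfl
        exact hN0
    · intro c x
      rw [hNF, hNF]
      have huc : u (c • x) = |c| * u x := by
        rw [hu]
        simp only [Pi.smul_apply, smul_eq_mul, mul_pow]
        rw [← Finset.mul_sum, Real.sqrt_mul (sq_nonneg c), Real.sqrt_sq_eq_abs]
      have hvc : (c • x) last = c * x last := rfl
      rw [huc, hvc, Fl_hom_abs]
    · intro x y
      rw [hNF, hNF, hNF]
      have h1 : u (x + y) ≤ u x + u y := by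
        rw [hu]
        exact sqrt_minkowski _ x y
      have h2 : (x+y) last = x last + y last := rfl
      rw [h2]
      calc Fl lam (u (x+y)) (x last + y last)
          ≤ Fl lam (u x + u y) (x last + y last) :=
            Fl_mono lam (u x + u y) (u (x+y)) (x last + y last) hlam hle (Real.sqrt_nonneg _) h1
        _ ≤ Fl lam (u x) (x last) + Fl lam (u y) (y last) := Fl_subadd lam _ _ _ _ hlam hle
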